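/- For every n ≥ 0, G_n = G_{L(n)} ∪ G_{R(n)}, where ∪ is the unlabeled merge defined by ⟨⟩∪⟨⟩ = ⟨⟩ and ⟨t,u⟩∪y = ⟨y∪u, t⟩. -/

import Mathlib

inductive UTree : Type
  | nil : UTree
  | node : UTree → UTree → UTree

namespace UTree

def size : UTree → ℕ
  | nil => 0
  | node t u => size t + size u + 1

def rank : UTree → ℕ
  | nil => 0
  | node _ u => rank u + 1

def WeightLeftist : UTree → Prop
  | nil => True
  | node t u => size u ≤ size t ∧ WeightLeftist t ∧ WeightLeftist u

def RankLeftist : UTree → Prop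
  | nil => True
  | node t u => rank u ≤ rank t ∧ RankLeftist t ∧ RankLeftist u

/-- unlabeled merge -/
def umerge : UTree → UTree → UTree
  | node t u, y => node (umerge y u) t
  | nil, node t u => node (umerge nil u) t
  | nil, nil => nil
termination_by x y => size x + size y
decreasing_by all_goals (simp [size]; try omega)

end UTree

/-- Hofstadter's G-sequence, packaged with the invariant `L n ≤ n`. -/
noncomputable def hofstadterL' : (n : ℕ) → {m : ℕ // m ≤ n} := fun n =>
  Nat.strongRecOn n (fun n ih =>
    match n, ih with
    | 0, _ => ⟨0, Nat.le_refl 0⟩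
    | n + 1, ih =>
      let a := ih n (Nat.lt_succ_self n)
      let b := ih a.1 (Nat.lt_succ_of_le a.2)
      ⟨n + 1 - b.1, Nat.sub_le _ _⟩)

/-- Hofstadter's G-sequence: L(0) = 0 and L(n) = n - L(L(n-1)). -/
noncomputable def hL (n : ℕ) : ℕ := (hofstadterL' n).1

noncomputable def hR (n : ℕ) : ℕ := n - hL n

/-- the golden tree of order n -/
noncomputable def golden : ℕ → UTree
  | 0 => UTree.nil
  | n + 1 => UTree.node (golden (hL n)) (golden (hR n))
termination_by n => n
decreasing_by
  · exact Nat.lt_succ_of_le (hofstadterL' n).2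
  · simp only [hR]; omega

lemma hL_le (n : ℕ) : hL n ≤ n := (hofstadterL' n).2

lemma hL_zero : hL 0 = 0 := by
  show (hofstadterL' 0).1 = 0
  rw [hofstadterL', Nat.strongRecOn_eq]

lemma hL_succ (n : ℕ) : hL (n+1) = n + 1 - hL (hL n) := by
  show (hofstadterL' (n+1)).1 = _
  rw [hofstadterL', Nat.strongRecOn_eq]
  rfl

lemma hL_step (n : ℕ) : hL n ≤ hL (n+1) ∧ hL (n+1) ≤ hL n + 1 := by
  induction n using Nat.strong_induction_on with
  | _ n ih =>
    match n with
    | 0 => simp [hL_succ, hL_zero]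
    | k+1 =>
      have h1 := ih k (by omega)
      have h2 := ih (hL k) (Nat.lt_succ_of_le (hL_le k))
      have e1 := hL_succ k
      have e2 := hL_succ (k+1)
      have l1 := hL_le k
      have l2 := hL_le (hL k)
      have hc : hL (k+1) = hL k ∨ hL (k+1) = hL k + 1 := by omega
      rcases hc with hc | hc
      · rw [hc] at e2
        omega
      · rw [hc] at e2
        omega

lemma hL_ge_one (n : ℕ) : 1 ≤ hL (n+1) := by
  have := hL_succ n
  have := hL_le n
  have := hL_le (hL n)
  omega

lemma hL_T (n : ℕ) : hL (hL (n+1) - 1) = n - hL n := by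
  match n with
  | 0 =>
    have : hL 1 = 1 := by have := hL_succ 0; simp [hL_zero] at this; omega
    simp [this, hL_zero]
  | k+1 =>
    have h2 := hL_step (hL k)
    have e1 := hL_succ k
    have e2 := hL_succ (k+1)
    have l1 := hL_le k
    have l2 := hL_le (hL k)
    have hc : hL (k+1) = hL k ∨ hL (k+1) = hL k + 1 := by have := hL_step k; omega
    rcases hc with hc | hc
    · rw [hc] at e2
      have hA : hL (k+1+1) - 1 = hL (k+1) := by omega
      rw [hA, hc]
      omega
    · rw [hc] at e2
      have hd : hL (hL k + 1) = hL (hL k) ∨ hL (hL k + 1) = hL (hL k) + 1 := by omega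
      rcases hd with hd | hd
      · have hA : hL (k+1+1) - 1 = hL (k+1) := by omega
        rw [hA, hc]
        omega
      · have hA : hL (k+1+1) - 1 = hL k := by omega
        rw [hA]
        omega

/-- For every n, G_n = G_{L(n)} ∪ G_{R(n)} under the unlabeled merge. -/
theorem golden_selfRecreating (n : ℕ) :
    golden n = UTree.umerge (golden (hL n)) (golden (hR n)) := by
  induction n using Nat.strong_induction_on with
  | _ n ih =>
    match n with
    | 0 =>
      simp only [hL_zero, hR, Nat.sub_zero]
      rw [golden, UTree.umerge]
    | k+1 =>
      obtain ⟨m, hm⟩ : ∃ m, hL (k+1) = m + 1 :=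
        ⟨hL (k+1) - 1, by have := hL_ge_one k; omega⟩
      have e1 := hL_succ k
      have l1 := hL_le k
      have l2 := hL_le (hL k)
      have hTm : hL m = k - hL k := by
        have := hL_T k
        rw [hm] at this
        simpa using this
      have hRm : hR m = hR (hL k) := by
        simp only [hR, hTm]
        omega
      have hR1 : hR (k+1) = hL (hL k) := by
        simp only [hR]
        omega
      rw [hm, hR1]
      rw [show golden (k+1) = UTree.node (golden (hL k)) (golden (hR k)) from by rw [golden]]
      rw [show golden (m+1) = UTree.node (golden (hL m)) (golden (hR m)) from by rw [golden]]
      rw [UTree.umerge]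
      congr 1
      · rw [hRm, ← ih (hL k) (by omega)]
      · rw [hTm]
        rfl
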